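/- For every n ≥ 1, the minimum number of columns of a K_2-saturated simple n-row 0-1 matrix equals n + 1; that is, sat(n, K_2) = forb(n, K_2) = n + 1. -/

import Mathlib

/-- `F` is a submatrix of `M` (up to row/column permutations): there are injections
selecting rows and columns of `M` giving `F`. -/
def IsSubmatrix {α : Type*} {k c n m : ℕ} (F : Fin k → Fin c → α) (M : Fin n → Fin m → α) :
    Prop :=
  ∃ r : Fin k → Fin n, ∃ s : Fin c → Fin m,
    Function.Injective r ∧ Function.Injective s ∧ ∀ i j, M (r i) (s j) = F i j

/-- A matrix is simple if its columns are pairwise distinct. -/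
def Simple' {α : Type*} {n m : ℕ} (M : Fin n → Fin m → α) : Prop :=
  ∀ j₁ j₂ : Fin m, (∀ i, M i j₁ = M i j₂) → j₁ = j₂

/-- `C` occurs as a column of `M`. -/
def IsCol {α : Type*} {n m : ℕ} (M : Fin n → Fin m → α) (C : Fin n → α) : Prop :=
  ∃ j, ∀ i, M i j = C i

/-- The matrix `[M, C]` obtained by appending the column `C` to `M`. -/
def addCol {α : Type*} {n m : ℕ} (M : Fin n → Fin m → α) (C : Fin n → α) :
    Fin n → Fin (m + 1) → α :=
  fun i j => if h : (j : ℕ) < m then M i ⟨j, h⟩ else C i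

/-- `M` is `F`-saturated: simple, `F`-free, and adding any missing column creates `F`. -/
def Saturated {α : Type*} {k c n m : ℕ} (F : Fin k → Fin c → α) (M : Fin n → Fin m → α) :
    Prop :=
  Simple' M ∧ ¬ IsSubmatrix F M ∧
    ∀ C : Fin n → α, ¬ IsCol M C → IsSubmatrix F (addCol M C)

/-- The set of sizes (numbers of columns) of `F`-saturated `n`-row matrices. -/
def satSet {α : Type*} {k c : ℕ} (F : Fin k → Fin c → α) (n : ℕ) : Set ℕ :=
  {m | ∃ M : Fin n → Fin m → α, Saturated F M}

/-- The set of sizes of simple `F`-free `n`-row matrices. -/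
def forbSet {α : Type*} {k c : ℕ} (F : Fin k → Fin c → α) (n : ℕ) : Set ℕ :=
  {m | ∃ M : Fin n → Fin m → α, Simple' M ∧ ¬ IsSubmatrix F M}

/-- `K_k`: the `k × 2^k` 0-1 matrix of all distinct 0-1 columns of length `k`. -/
def Kfull (k : ℕ) : Fin k → Fin (2 ^ k) → Bool :=
  fun i j => Nat.testBit j.val i.val


def Shatters {n m : ℕ} (M : Fin n → Fin m → Bool) (a b : Fin n) : Prop :=
  ∀ p q : Bool, ∃ j, M a j = p ∧ M b j = q

lemma testBit_exists : ∀ p q : Bool, ∃ j : Fin (2 ^ 2),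
    Nat.testBit j.val 0 = p ∧ Nat.testBit j.val 1 = q := by decide

lemma testBit_inj : ∀ j₁ j₂ : Fin (2 ^ 2),
    Nat.testBit j₁.val 0 = Nat.testBit j₂.val 0 →
    Nat.testBit j₁.val 1 = Nat.testBit j₂.val 1 → j₁ = j₂ := by decide

lemma submatrix_iff {n m : ℕ} (M : Fin n → Fin m → Bool) :
    IsSubmatrix (Kfull 2) M ↔ ∃ a b, a ≠ b ∧ Shatters M a b := by
  constructor
  · rintro ⟨r, s, hr, hs, h⟩
    refine ⟨r 0, r 1, fun e => absurd (hr e) (by decide), fun p q => ?_⟩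
    obtain ⟨j, hj0, hj1⟩ := testBit_exists p q
    exact ⟨s j, by rw [h 0 j]; exact hj0, by rw [h 1 j]; exact hj1⟩
  · rintro ⟨a, b, hab, hsh⟩
    refine ⟨![a, b], fun j => (hsh (Nat.testBit j.val 0) (Nat.testBit j.val 1)).choose,
      ?_, ?_, ?_⟩
    · intro x y hxy
      fin_cases x <;> fin_cases y <;> simp_all
    · intro j₁ j₂ he
      have h1 := (hsh (Nat.testBit j₁.val 0) (Nat.testBit j₁.val 1)).choose_spec
      have h2 := (hsh (Nat.testBit j₂.val 0) (Nat.testBit j₂.val 1)).choose_spec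
      simp only at he
      rw [he] at h1
      exact testBit_inj _ _ (h1.1.symm.trans h2.1) (h1.2.symm.trans h2.2)
    · intro i j
      have h1 := (hsh (Nat.testBit j.val 0) (Nat.testBit j.val 1)).choose_spec
      fin_cases i
      · exact h1.1
      · exact h1.2

lemma bool_xor_cancel : ∀ c p : Bool, xor c (xor c p) = p := by decide

lemma bool_xor_left_inj : ∀ c x y : Bool, xor c x = xor c y → x = y := by decide

def flipM {n m : ℕ} (B : Fin n → Bool) (M : Fin n → Fin m → Bool) : Fin n → Fin m → Bool :=
  fun i j => xor (B i) (M i j)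

lemma flipM_flipM {n m : ℕ} (B : Fin n → Bool) (M : Fin n → Fin m → Bool) :
    flipM B (flipM B M) = M := by
  funext i j; exact bool_xor_cancel _ _

lemma shatters_flip_of {n m : ℕ} (B : Fin n → Bool) (M : Fin n → Fin m → Bool) {a b : Fin n}
    (h : Shatters M a b) : Shatters (flipM B M) a b := by
  intro p q
  obtain ⟨j, h1, h2⟩ := h (xor (B a) p) (xor (B b) q)
  exact ⟨j, by rw [flipM, h1]; exact bool_xor_cancel _ _,
    by rw [flipM, h2]; exact bool_xor_cancel _ _⟩

lemma shatters_flip {n m : ℕ} (B : Fin n → Bool) (M : Fin n → Fin m → Bool) {a b : Fin n} :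
    Shatters (flipM B M) a b ↔ Shatters M a b := by
  constructor
  · intro h
    have := shatters_flip_of B (flipM B M) h
    rwa [flipM_flipM] at this
  · exact shatters_flip_of B M

lemma simple_flip {n m : ℕ} (B : Fin n → Bool) (M : Fin n → Fin m → Bool)
    (hs : Simple' M) : Simple' (flipM B M) := by
  intro j1 j2 h
  exact hs j1 j2 fun i => bool_xor_left_inj (B i) _ _ (h i)

lemma isCol_flip {n m : ℕ} (B : Fin n → Bool) (M : Fin n → Fin m → Bool) (C : Fin n → Bool) :
    IsCol (flipM B M) C ↔ IsCol M (fun i => xor (B i) (C i)) := by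
  constructor
  · rintro ⟨j, hj⟩
    refine ⟨j, fun i => ?_⟩
    show M i j = xor (B i) (C i)
    rw [← hj i, flipM]; exact (bool_xor_cancel _ _).symm
  · rintro ⟨j, hj⟩
    refine ⟨j, fun i => ?_⟩
    rw [flipM, hj i]; exact bool_xor_cancel _ _

lemma addCol_flip {n m : ℕ} (B : Fin n → Bool) (M : Fin n → Fin m → Bool) (C : Fin n → Bool) :
    flipM B (addCol M C) = addCol (flipM B M) (fun i => xor (B i) (C i)) := by
  funext i j
  by_cases h : (j : ℕ) < m <;> simp [flipM, addCol, h]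

def M0 (n : ℕ) : Fin n → Fin (n + 1) → Bool :=
  fun i j => decide ((j : ℕ) = (i : ℕ) + 1)

lemma M0_simple (n : ℕ) : Simple' (M0 n) := by
  intro j1 j2 h
  have key : ∀ i : Fin n, ((j1 : ℕ) = (i : ℕ) + 1 ↔ (j2 : ℕ) = (i : ℕ) + 1) := by
    intro i
    have := h i
    simpa [M0, decide_eq_decide] using this
  apply Fin.ext
  rcases Nat.eq_zero_or_eq_succ_pred (j2 : ℕ) with h2 | h2
  · rcases Nat.eq_zero_or_eq_succ_pred (j1 : ℕ) with h1 | h1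
    · omega
    · have hl : (j1 : ℕ) - 1 < n := by omega
      have := (key ⟨(j1 : ℕ) - 1, hl⟩).mp (by simp; omega)
      simp at this; omega
  · have hk : (j2 : ℕ) - 1 < n := by omega
    have := (key ⟨(j2 : ℕ) - 1, hk⟩).mpr (by simp; omega)
    simp at this; omega

lemma M0_free (n : ℕ) : ∀ a b : Fin n, a ≠ b → ¬ Shatters (M0 n) a b := by
  intro a b hab hsh
  obtain ⟨j, h1, h2⟩ := hsh true true
  simp only [M0, decide_eq_true_eq] at h1 h2
  exact hab (Fin.ext (by omega))

lemma M0_sat (n : ℕ) : ∀ C : Fin n → Bool, ¬ IsCol (M0 n) C →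
    IsSubmatrix (Kfull 2) (addCol (M0 n) C) := by
  intro C hC
  have htwo : ∃ a b : Fin n, a ≠ b ∧ C a = true ∧ C b = true := by
    by_contra h
    push_neg at h
    apply hC
    by_cases he : ∃ a, C a = true
    · obtain ⟨a, ha⟩ := he
      refine ⟨⟨(a : ℕ) + 1, by omega⟩, fun i => ?_⟩
      by_cases hia : i = a
      · subst hia; simp [M0, ha]
      · have hCi : C i = false := by
          by_contra hci
          exact h i a hia (by simpa using hci) ha
        simp only [M0, hCi, decide_eq_false_iff_not]
        intro hcon
        exact hia (Fin.ext (by omega))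
    · push_neg at he
      refine ⟨⟨0, by omega⟩, fun i => ?_⟩
      have : C i = false := by simpa using he i
      simp [M0, this]
  obtain ⟨a, b, hab, ha, hb⟩ := htwo
  rw [submatrix_iff]
  refine ⟨a, b, hab, fun p q => ?_⟩
  have hvab : (a : ℕ) ≠ (b : ℕ) := fun e => hab (Fin.ext e)
  cases p <;> cases q
  · exact ⟨⟨0, by omega⟩, by simp [addCol, M0], by simp [addCol, M0]⟩
  · refine ⟨⟨(b : ℕ) + 1, by omega⟩, ?_, ?_⟩
    · simp only [addCol, M0]
      rw [dif_pos (by omega : ((b : ℕ) + 1) < n + 1)]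
      simp; omega
    · simp only [addCol, M0]
      rw [dif_pos (by omega : ((b : ℕ) + 1) < n + 1)]
      simp
  · refine ⟨⟨(a : ℕ) + 1, by omega⟩, ?_, ?_⟩
    · simp only [addCol, M0]
      rw [dif_pos (by omega : ((a : ℕ) + 1) < n + 1)]
      simp
    · simp only [addCol, M0]
      rw [dif_pos (by omega : ((a : ℕ) + 1) < n + 1)]
      simp; omega
  · refine ⟨⟨n + 1, by omega⟩, ?_, ?_⟩ <;>
      · simp only [addCol]
        rw [dif_neg (by omega : ¬ ((n + 1 : ℕ) < n + 1))]
        simp [ha, hb]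

lemma M0_saturated (n : ℕ) : Saturated (Kfull 2) (M0 n) := by
  refine ⟨M0_simple n, ?_, M0_sat n⟩
  rw [submatrix_iff]
  rintro ⟨a, b, hab, h⟩
  exact M0_free n a b hab h

def colLe {n m : ℕ} (M : Fin n → Fin m → Bool) (x y : Fin n) : Prop :=
  ∀ j, M x j = true → M y j = true

lemma colLe_refl {n m : ℕ} (M : Fin n → Fin m → Bool) (x : Fin n) : colLe M x x :=
  fun _ h => h

lemma colLe_trans {n m : ℕ} (M : Fin n → Fin m → Bool) {x y z : Fin n}
    (h1 : colLe M x y) (h2 : colLe M y z) : colLe M x z :=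
  fun j h => h2 j (h1 j h)

lemma lower_bound {n m : ℕ} (M : Fin n → Fin m → Bool)
    (hfree : ∀ a b : Fin n, a ≠ b → ¬ Shatters M a b)
    (hsat : ∀ C : Fin n → Bool, ¬ IsCol M C → ∃ a b, a ≠ b ∧ Shatters (addCol M C) a b)
    (j0 : Fin m) (hj0 : ∀ i, M i j0 = false) : n + 1 ≤ m := by
  classical
  -- extract the "blocked" structure from saturation
  have blocked : ∀ C : Fin n → Bool, ¬ IsCol M C → ∃ a b : Fin n, a ≠ b ∧
      (∀ p q : Bool, ¬(p = C a ∧ q = C b) → ∃ j, M a j = p ∧ M b j = q) ∧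
      (∀ j, ¬(M a j = C a ∧ M b j = C b)) := by
    intro C hC
    obtain ⟨a, b, hab, hsh⟩ := hsat C hC
    have hpat : ∀ p q : Bool, ¬(p = C a ∧ q = C b) → ∃ j, M a j = p ∧ M b j = q := by
      intro p q hpq
      obtain ⟨j', h1, h2⟩ := hsh p q
      by_cases hj : (j' : ℕ) < m
      · refine ⟨⟨j', hj⟩, ?_, ?_⟩
        · rw [addCol, dif_pos hj] at h1; exact h1
        · rw [addCol, dif_pos hj] at h2; exact h2
      · rw [addCol, dif_neg hj] at h1
        rw [addCol, dif_neg hj] at h2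
        exact absurd ⟨h1.symm, h2.symm⟩ hpq
    refine ⟨a, b, hab, hpat, fun j hj => ?_⟩
    apply hfree a b hab
    intro p q
    by_cases hpq : p = C a ∧ q = C b
    · exact ⟨j, hpq.1 ▸ hj.1, hpq.2 ▸ hj.2⟩
    · exact hpat p q hpq
  -- every row is covered by some column
  have cover : ∀ i : Fin n, ∃ j, M i j = true := by
    intro i
    by_cases hc : IsCol M (fun x => decide (x = i))
    · obtain ⟨j, hj⟩ := hc
      exact ⟨j, by simpa using hj i⟩
    · obtain ⟨a, b, hab, hpat, hnot⟩ := blocked _ hc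
      by_cases ha : a = i
      · have hbne : b ≠ i := fun e => hab (ha.trans e.symm)
        obtain ⟨j, hj1, _⟩ := hpat true true (by simp [hbne])
        exact ⟨j, ha ▸ hj1⟩
      · by_cases hb : b = i
        · obtain ⟨j, _, hj2⟩ := hpat true true (by simp [ha])
          exact ⟨j, hb ▸ hj2⟩
        · exact absurd ⟨by simp [hj0 a, ha], by simp [hj0 b, hb]⟩ (hnot j0)
  -- antisymmetry
  have antisym : ∀ i b : Fin n, i ≠ b → colLe M i b → colLe M b i → False := by
    intro i b hib hle1 hle2
    set C : Fin n → Bool := fun x => decide (colLe M i x ∧ x ≠ b) with hCdef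
    have hCi : C i = true := by simp [hCdef, colLe_refl, hib]
    have hCb : C b = false := by simp [hCdef]
    have hCnot : ¬ IsCol M C := by
      rintro ⟨j, hj⟩
      have h1 : M i j = true := by rw [hj i, hCi]
      have h2 : M b j = true := hle1 j h1
      rw [hj b, hCb] at h2
      exact Bool.false_ne_true h2
    obtain ⟨a, b', hab', hpat, hnot⟩ := blocked C hCnot
    cases hCa : C a <;> cases hCb' : C b'
    · exact hnot j0 ⟨by rw [hj0 a, hCa], by rw [hj0 b', hCb']⟩
    · -- C a = false, C b' = true
      have hib' : colLe M i b' ∧ b' ≠ b := by simpa [hCdef] using hCb'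
      have hba : colLe M b' a := by
        intro j hj
        cases hMa : M a j
        · exact absurd (hnot j ⟨by rw [hMa, hCa], by rw [hj, hCb']⟩) not_false
        · rfl
      -- then i ≤ a, so C a should be true unless a = b
      have hia : colLe M i a := colLe_trans M hib'.1 hba
      have hab2 : a = b := by
        by_contra hne
        have : C a = true := by simp [hCdef, hia, hne]
        rw [hCa] at this; exact Bool.false_ne_true this
      obtain ⟨j2, hj2a, hj2b⟩ := hpat true false (by rw [hCa]; simp)
      -- a = b, M a j2 = true, M b' j2 = false; but b ≤ i ≤ b' gives M b' j2 = true
      have : M b' j2 = true := hib'.1 j2 (hle2 j2 (hab2 ▸ hj2a))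
      rw [hj2b] at this; exact Bool.false_ne_true this
    · -- C a = true, C b' = false
      have hia : colLe M i a ∧ a ≠ b := by simpa [hCdef] using hCa
      have hab'' : colLe M a b' := by
        intro j hj
        cases hMb : M b' j
        · exact absurd (hnot j ⟨by rw [hj, hCa], by rw [hMb, hCb']⟩) not_false
        · rfl
      have hib' : colLe M i b' := colLe_trans M hia.1 hab''
      have hb'b : b' = b := by
        by_contra hne
        have : C b' = true := by simp [hCdef, hib', hne]
        rw [hCb'] at this; exact Bool.false_ne_true this
      obtain ⟨j2, hj2a, hj2b⟩ := hpat false true (by rw [hCa]; simp)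
      have : M a j2 = true := hia.1 j2 (hle2 j2 (hb'b ▸ hj2b))
      rw [hj2a] at this; exact Bool.false_ne_true this
    · -- C a = true, C b' = true
      have h1 : colLe M i a := (by simpa [hCdef] using hCa : colLe M i a ∧ a ≠ b).1
      have h2 : colLe M i b' := (by simpa [hCdef] using hCb' : colLe M i b' ∧ b' ≠ b).1
      obtain ⟨j, hj⟩ := cover i
      exact hnot j ⟨by rw [h1 j hj, hCa], by rw [h2 j hj, hCb']⟩
  -- the up-set of every row occurs as a column
  have upMem : ∀ i : Fin n, IsCol M (fun x => decide (colLe M i x)) := by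
    intro i
    by_contra hC
    obtain ⟨a, b', hab', hpat, hnot⟩ := blocked _ hC
    cases hCa : (decide (colLe M i a) : Bool) <;> cases hCb' : (decide (colLe M i b') : Bool)
    · exact hnot j0 ⟨by rw [hj0 a]; simp only [hCa], by rw [hj0 b']; simp only [hCb']⟩
    · have hib' : colLe M i b' := by simpa using hCb'
      have hba : colLe M b' a := by
        intro j hj
        cases hMa : M a j
        · exact absurd (hnot j ⟨by rw [hMa]; simp only [hCa], by rw [hj]; simp only [hCb']⟩)
            not_false
        · rfl
      have : colLe M i a := colLe_trans M hib' hba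
      simp [this] at hCa
    · have hia : colLe M i a := by simpa using hCa
      have hab'' : colLe M a b' := by
        intro j hj
        cases hMb : M b' j
        · exact absurd (hnot j ⟨by rw [hj]; simp only [hCa], by rw [hMb]; simp only [hCb']⟩)
            not_false
        · rfl
      have : colLe M i b' := colLe_trans M hia hab''
      simp [this] at hCb'
    · have h1 : colLe M i a := by simpa using hCa
      have h2 : colLe M i b' := by simpa using hCb'
      obtain ⟨j, hj⟩ := cover i
      exact hnot j ⟨by rw [h1 j hj]; simp only [hCa], by rw [h2 j hj]; simp only [hCb']⟩
  -- build an injection Fin (n+1) → Fin m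
  choose f hf using upMem
  have hfspec : ∀ i x, M x (f i) = decide (colLe M i x) := fun i x => hf i x
  have hftrue : ∀ i, M i (f i) = true := by
    intro i; rw [hfspec i i]; simp [colLe_refl]
  have hfne : ∀ i, f i ≠ j0 := by
    intro i he
    have := hftrue i
    rw [he, hj0 i] at this
    exact Bool.false_ne_true this
  have hfinj : Function.Injective f := by
    intro i i' he
    by_contra hne
    have h1 : colLe M i' i := by
      have := hfspec i' i
      rw [← he, hfspec i i] at this
      simpa [colLe_refl] using this.symm
    have h2 : colLe M i i' := by
      have := hfspec i i'
      rw [he, hfspec i' i'] at this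
      simpa [colLe_refl] using this
    exact antisym i i' hne h2 h1
  have hg : Function.Injective (fun k : Fin (n + 1) =>
      if h : (k : ℕ) < n then f ⟨k, h⟩ else j0) := by
    intro k1 k2 he
    simp only at he
    by_cases h1 : (k1 : ℕ) < n <;> by_cases h2 : (k2 : ℕ) < n
    · rw [dif_pos h1, dif_pos h2] at he
      have := hfinj he
      exact Fin.ext (by simpa using congrArg Fin.val this)
    · rw [dif_pos h1, dif_neg h2] at he
      exact absurd he (hfne _)
    · rw [dif_neg h1, dif_pos h2] at he
      exact absurd he.symm (hfne _)
    · exact Fin.ext (by omega)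
  have := Fintype.card_le_of_injective _ hg
  simpa using this

lemma upper_bound' {n m : ℕ} (M : Fin n → Fin m → Bool) (hs : Simple' M)
    (hfree : ∀ a b : Fin n, a ≠ b → ¬ Shatters M a b)
    (j0 : Fin m) (hj0 : ∀ i, M i j0 = false) : m ≤ n + 1 := by
  classical
  have comparable : ∀ (x y : Fin n) (j : Fin m), x ≠ y → M x j = true → M y j = true →
      colLe M x y ∨ colLe M y x := by
    intro x y j hxy hx hy
    by_contra h
    push_neg at h
    obtain ⟨h1, h2⟩ := h
    simp only [colLe, not_forall] at h1 h2
    obtain ⟨j1, hj1x, hj1y⟩ := h1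
    obtain ⟨j2, hj2y, hj2x⟩ := h2
    apply hfree x y hxy
    intro p q
    cases p <;> cases q
    · exact ⟨j0, hj0 x, hj0 y⟩
    · exact ⟨j2, Bool.eq_false_iff.mpr hj2x, hj2y⟩
    · exact ⟨j1, hj1x, Bool.eq_false_iff.mpr hj1y⟩
    · exact ⟨j, hx, hy⟩
  set cnt : Fin n → ℕ := fun x => (Finset.univ.filter (fun j => M x j = true)).card with hcnt
  have cntmono : ∀ x y : Fin n, colLe M x y → cnt x ≤ cnt y := by
    intro x y hxy
    apply Finset.card_le_card
    intro j hj
    simp only [Finset.mem_filter, Finset.mem_univ, true_and] at hj ⊢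
    exact hxy j hj
  have le_of_le_cnt : ∀ x y : Fin n, colLe M x y → cnt y ≤ cnt x → colLe M y x := by
    intro x y hxy hc
    have hsub : Finset.univ.filter (fun j => M x j = true) ⊆
        Finset.univ.filter (fun j => M y j = true) := by
      intro j hj
      simp only [Finset.mem_filter, Finset.mem_univ, true_and] at hj ⊢
      exact hxy j hj
    have heq := Finset.eq_of_subset_of_card_le hsub hc
    intro j hj
    have : j ∈ Finset.univ.filter (fun j => M x j = true) := by
      rw [heq]; simp [hj]
    simpa using this
  have bottom : ∀ j : Fin m, j ≠ j0 → ∃ i, M i j = true ∧ ∀ y, M y j = true → colLe M i y := by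
    intro j hj
    have hne : ∃ i, M i j = true := by
      by_contra h
      push_neg at h
      apply hj
      apply hs
      intro i
      rw [hj0 i, Bool.eq_false_iff.mpr (h i)]
    set s : Finset (Fin n) := Finset.univ.filter (fun i => M i j = true) with hsdef
    have hsne : s.Nonempty := by
      obtain ⟨i, hi⟩ := hne
      exact ⟨i, by simp [hsdef, hi]⟩
    obtain ⟨i, his, hmin⟩ := Finset.exists_min_image s cnt hsne
    have hij : M i j = true := by simpa [hsdef] using his
    refine ⟨i, hij, fun y hy => ?_⟩
    by_cases hyi : y = i
    · subst hyi; exact colLe_refl M y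
    · rcases comparable i y j (fun e => hyi e.symm) hij hy with h | h
      · exact h
      · exact le_of_le_cnt y i h (hmin y (by simp [hsdef, hy]))
  have hg : Function.Injective (fun j : Fin m =>
      if h : j = j0 then (none : Option (Fin n)) else some (bottom j h).choose) := by
    intro j1 j2 he
    simp only at he
    by_cases h1 : j1 = j0 <;> by_cases h2 : j2 = j0
    · rw [h1, h2]
    · rw [dif_pos h1, dif_neg h2] at he; exact absurd he (by simp)
    · rw [dif_neg h1, dif_pos h2] at he; exact absurd he (by simp)
    · rw [dif_neg h1, dif_neg h2, Option.some_inj] at he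
      obtain ⟨hi1, hmin1⟩ := (bottom j1 h1).choose_spec
      obtain ⟨hi2, hmin2⟩ := (bottom j2 h2).choose_spec
      rw [he] at hi1 hmin1
      apply hs
      intro x
      cases hx1 : M x j1 <;> cases hx2 : M x j2
      · rfl
      · have h := hmin2 x hx2 j1 hi1
        rw [hx1] at h; exact absurd h (by simp)
      · have h := hmin1 x hx1 j2 hi2
        rw [hx2] at h; exact absurd h (by simp)
      · rfl
  have := Fintype.card_le_of_injective _ hg
  simpa using this

lemma upper_bound {n m : ℕ} (M : Fin n → Fin m → Bool) (hs : Simple' M)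
    (hfree : ∀ a b : Fin n, a ≠ b → ¬ Shatters M a b) : m ≤ n + 1 := by
  rcases Nat.eq_zero_or_pos m with hm | hm
  · omega
  · set B : Fin n → Bool := fun i => M i ⟨0, hm⟩ with hB
    refine upper_bound' (flipM B M) (simple_flip B M hs) ?_ ⟨0, hm⟩ ?_
    · intro a b hab hsh
      exact hfree a b hab ((shatters_flip B M).mp hsh)
    · intro i
      simp [flipM, hB]

theorem stmt_5 (n : ℕ) (hn : 1 ≤ n) :
    IsLeast (satSet (Kfull 2) n) (n + 1) ∧ IsGreatest (forbSet (Kfull 2) n) (n + 1) := by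
  constructor
  · constructor
    · exact ⟨M0 n, M0_saturated n⟩
    · intro m hm
      obtain ⟨M, hsimple, hfreeS, hadd⟩ := hm
      have hfree : ∀ a b : Fin n, a ≠ b → ¬ Shatters M a b := fun a b hab hsh =>
        hfreeS ((submatrix_iff M).mpr ⟨a, b, hab, hsh⟩)
      rcases Nat.eq_zero_or_pos m with hm0 | hm0
      · subst hm0
        exfalso
        have hnc : ¬ IsCol M (fun _ => false) := by rintro ⟨j, -⟩; exact j.elim0
        obtain ⟨a, b, hab, hsh⟩ := (submatrix_iff _).mp (hadd _ hnc)
        obtain ⟨j, hj, -⟩ := hsh true true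
        rw [addCol, dif_neg (by omega : ¬ (j : ℕ) < 0)] at hj
        exact Bool.false_ne_true hj
      · set B : Fin n → Bool := fun i => M i ⟨0, hm0⟩ with hB
        refine lower_bound (flipM B M) ?_ ?_ ⟨0, hm0⟩ ?_
        · intro a b hab hsh
          exact hfree a b hab ((shatters_flip B M).mp hsh)
        · intro C hC
          have hC' : ¬ IsCol M (fun i => xor (B i) (C i)) := fun h =>
            hC ((isCol_flip B M C).mpr h)
          obtain ⟨a, b, hab, hsh⟩ := (submatrix_iff _).mp (hadd _ hC')
          refine ⟨a, b, hab, ?_⟩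
          have h1 := shatters_flip_of B _ hsh
          rw [addCol_flip] at h1
          have h2 : (fun i => xor (B i) (xor (B i) (C i))) = C :=
            funext fun i => bool_xor_cancel _ _
          rwa [h2] at h1
        · intro i
          simp [flipM, hB]
  · constructor
    · exact ⟨M0 n, M0_simple n, (M0_saturated n).2.1⟩
    · intro m hm
      obtain ⟨M, hsimple, hfreeS⟩ := hm
      exact upper_bound M hsimple fun a b hab hsh =>
        hfreeS ((submatrix_iff M).mpr ⟨a, b, hab, hsh⟩)
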